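/- arXiv:2103.14013 — 9 statements merged into one kernel-verified Lean document; each statement's English description precedes it below -/
import Mathlib

section
/- Let X be a well-founded basic code. Then the lexicographic order ≺ restricted to X is a well-order: it is a linear order on X and every nonempty subset of X has a ≺-least element (equivalently, ≺ is well-founded on X). -/
universe u

/-- A *basic code*: a nonempty set of finite lists of ordinals that is closed under
prefixes and has no gaps. -/
def IsBasicCode (X : Set (List Ordinal.{u})) : Prop :=
  X.Nonempty ∧
  (∀ s ∈ X, ∀ t : List Ordinal.{u}, t <+: s → t ∈ X) ∧
  (∀ s : List Ordinal.{u}, ∀ α₁ α₂ : Ordinal.{u}, α₁ < α₂ → s ++ [α₂] ∈ X → s ++ [α₁] ∈ X)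

/-- The proper-extension relation on `X`: `ν` is below `η` iff `η` is a proper prefix of `ν`. -/
def Below (X : Set (List Ordinal.{u})) (ν η : {s : List Ordinal.{u} // s ∈ X}) : Prop :=
  (η : List Ordinal.{u}) <+: (ν : List Ordinal.{u}) ∧ (η : List Ordinal.{u}) ≠ (ν : List Ordinal.{u})

/-- A basic code is *well-founded* if the proper-extension relation is well-founded on it. -/
def IsWFCode (X : Set (List Ordinal.{u})) : Prop :=
  IsBasicCode X ∧ WellFounded (Below X)

/-- `f` satisfies the defining recurrence of the decode function of the code `X`:
the members of `f s` are exactly the sets `f (s ++ [α])` for those `α` with `s ++ [α] ∈ X`. -/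
def IsDecodeFun (X : Set (List Ordinal.{u})) (f : List Ordinal.{u} → ZFSet.{u}) : Prop :=
  ∀ s ∈ X, ∀ y : ZFSet.{u},
    y ∈ f s ↔ ∃ α : Ordinal.{u}, s ++ [α] ∈ X ∧ y = f (s ++ [α])

/-- A list is never lexicographically below one of its prefixes. -/
lemma not_lex_of_prefix {t s : List Ordinal.{u}} (h : t <+: s) :
    ¬ List.Lex (· < ·) s t := by
  obtain ⟨r, rfl⟩ := h
  induction t with
  | nil => exact List.not_lex_nil
  | cons a t ih =>
    intro hl
    cases hl with
    | rel h => exact lt_irrefl _ h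
    | cons h => exact ih h

/-- A proper prefix is lexicographically smaller. -/
lemma lex_of_proper_prefix {t s : List Ordinal.{u}} (h : t <+: s) (hne : t ≠ s) :
    List.Lex (· < ·) t s := by
  obtain ⟨r, rfl⟩ := h
  induction t with
  | nil =>
    cases r with
    | nil => exact absurd rfl hne
    | cons b r => exact List.Lex.nil
  | cons a t ih =>
    refine List.Lex.cons (ih ?_)
    intro he
    exact hne (by simpa using congrArg (a :: ·) he)

/-- Lex comparison decided at the first differing entry after a common prefix. -/
lemma lex_append_cons {t : List Ordinal.{u}} {a b : Ordinal.{u}} (u v : List Ordinal.{u})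
    (h : a < b) : List.Lex (· < ·) (t ++ a :: u) (t ++ b :: v) := by
  induction t with
  | nil => exact List.Lex.rel h
  | cons c t ih => exact List.Lex.cons ih

/-- The lexicographic order `≺` restricted to a well-founded basic code `X` is a
well-order: it is a strict linear order on `X`, every nonempty subset of `X` has a
`≺`-least element, and (equivalently) `≺` is well-founded on `X`. -/
theorem lex_isWellOrder_on_wfCode (X : Set (List Ordinal.{u})) (hX : IsWFCode X) :
    IsStrictTotalOrder {s : List Ordinal.{u} // s ∈ X}
      (fun s t : {s : List Ordinal.{u} // s ∈ X} =>
        List.Lex (· < ·) (s : List Ordinal.{u}) (t : List Ordinal.{u})) ∧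
    (∀ S : Set {s : List Ordinal.{u} // s ∈ X}, S.Nonempty →
      ∃ m ∈ S, ∀ t ∈ S, ¬ List.Lex (· < ·) (t : List Ordinal.{u}) (m : List Ordinal.{u})) ∧
    WellFounded (fun s t : {s : List Ordinal.{u} // s ∈ X} =>
      List.Lex (· < ·) (s : List Ordinal.{u}) (t : List Ordinal.{u})) := by
  obtain ⟨⟨hne, hpre, _hgap⟩, hwf⟩ := hX
  haveI hinst : IsStrictTotalOrder (List Ordinal.{u}) (List.Lex (· < ·)) :=
    { isStrictWeakOrder_of_isOrderConnected with }
  -- strict total order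
  have hsto : IsStrictTotalOrder {s : List Ordinal.{u} // s ∈ X}
      (fun s t : {s : List Ordinal.{u} // s ∈ X} =>
        List.Lex (· < ·) (s : List Ordinal.{u}) (t : List Ordinal.{u})) := by
    refine { trichotomous := ?_, irrefl := ?_, trans := ?_ }
    · intro a b hab hba
      rcases trichotomous (r := List.Lex (· < ·)) (a : List Ordinal.{u}) (b : List Ordinal.{u})
        with h | h | h
      · exact absurd h hab
      · exact Subtype.ext h
      · exact absurd h hba
    · intro a h
      exact (irrefl (r := List.Lex (· < ·)) (a : List Ordinal.{u})) h
    · intro a b c hab hbc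
      exact _root_.trans (r := List.Lex (· < ·)) hab hbc
  -- the key least-element lemma, by well-founded induction on `Below`
  have key : ∀ t : {s : List Ordinal.{u} // s ∈ X},
      ∀ S : Set {s : List Ordinal.{u} // s ∈ X}, S.Nonempty →
      (∀ s ∈ S, (t : List Ordinal.{u}) <+: (s : List Ordinal.{u})) →
      ∃ m ∈ S, ∀ s ∈ S, ¬ List.Lex (· < ·) (s : List Ordinal.{u}) (m : List Ordinal.{u}) := by
    intro t
    induction t using hwf.induction with
    | _ t ih =>
      intro S hS hpref
      by_cases htS : t ∈ S
      · refine ⟨t, htS, fun s hs => not_lex_of_prefix (hpref s hs)⟩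
      · -- every element of S properly extends t; look at the next coordinate
        have hext : ∀ s ∈ S, ∃ α : Ordinal.{u},
            (t : List Ordinal.{u}) ++ [α] <+: (s : List Ordinal.{u}) := by
          intro s hs
          obtain ⟨r, hr⟩ := hpref s hs
          cases r with
          | nil =>
            exact absurd (Subtype.ext (by simpa using hr.symm) : s = t) (fun h => htS (h ▸ hs))
          | cons α r =>
            exact ⟨α, r, by simpa using hr⟩
        set A : Set Ordinal.{u} :=
          {α | ∃ s ∈ S, (t : List Ordinal.{u}) ++ [α] <+: (s : List Ordinal.{u})} with hA
        have hAne : A.Nonempty := by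
          obtain ⟨s, hs⟩ := hS
          obtain ⟨α, hα⟩ := hext s hs
          exact ⟨α, s, hs, hα⟩
        obtain ⟨α₀, hα₀A, hα₀min⟩ := Ordinal.lt_wf.has_min A hAne
        obtain ⟨s₀, hs₀S, hs₀⟩ := hα₀A
        have htα₀X : (t : List Ordinal.{u}) ++ [α₀] ∈ X := hpre _ s₀.2 _ hs₀
        have hbelow : Below X ⟨(t : List Ordinal.{u}) ++ [α₀], htα₀X⟩ t :=
          ⟨⟨[α₀], rfl⟩, by simp⟩
        set S' : Set {s : List Ordinal.{u} // s ∈ X} :=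
          {s ∈ S | (t : List Ordinal.{u}) ++ [α₀] <+: (s : List Ordinal.{u})} with hS'
        obtain ⟨m, hmS', hmmin⟩ :=
          ih ⟨(t : List Ordinal.{u}) ++ [α₀], htα₀X⟩ hbelow S' ⟨s₀, hs₀S, hs₀⟩
            (fun s hs => hs.2)
        refine ⟨m, hmS'.1, ?_⟩
        intro s hs
        obtain ⟨α, hα⟩ := hext s hs
        rcases eq_or_lt_of_le (le_of_not_gt (hα₀min α ⟨s, hs, hα⟩)) with h | h
        · exact hmmin s ⟨hs, h ▸ hα⟩
        · -- α₀ < α : m starts with t ++ [α₀], s with t ++ [α], so m ≺ s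
          obtain ⟨u, hu⟩ := hmS'.2
          obtain ⟨v, hv⟩ := hα
          have hlex : List.Lex (· < ·) (m : List Ordinal.{u}) (s : List Ordinal.{u}) := by
            rw [← hu, ← hv]
            simpa using lex_append_cons (t := (t : List Ordinal.{u})) u v h
          exact asymm (r := List.Lex (· < ·)) hlex
  -- the empty list is in X
  have hnilX : ([] : List Ordinal.{u}) ∈ X := by
    obtain ⟨s, hs⟩ := hne
    exact hpre s hs [] ⟨s, rfl⟩
  have hmin : ∀ S : Set {s : List Ordinal.{u} // s ∈ X}, S.Nonempty →
      ∃ m ∈ S, ∀ t ∈ S, ¬ List.Lex (· < ·) (t : List Ordinal.{u}) (m : List Ordinal.{u}) :=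
    fun S hS => key ⟨[], hnilX⟩ S hS (fun s _ => ⟨(s : List Ordinal.{u}), rfl⟩)
  exact ⟨hsto, hmin, WellFounded.wellFounded_iff_has_min.mpr hmin⟩
end

section
/- Let X₁ and X₂ be well-founded basic codes, and suppose there is an order isomorphism e : X₁ ≃ X₂ with respect to the proper-prefix relation, i.e. a bijection e between X₁ and X₂ such that for all s, t ∈ X₁, s is a proper prefix of t if and only if e(s) is a proper prefix of e(t). Then Decode(X₁) = Decode(X₂). -/
universe u

lemma prefix_of_ne_snoc {v s : List Ordinal.{u}} {α : Ordinal.{u}}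
    (h : v <+: s ++ [α]) (hne : v ≠ s ++ [α]) : v <+: s := by
  obtain ⟨r, hr⟩ := h
  rcases List.eq_nil_or_concat r with rfl | ⟨r', a, rfl⟩
  · simp at hr; exact absurd hr hne
  · have h1 : (v ++ r') ++ [a] = s ++ [α] := by simpa [List.concat_eq_append] using hr
    have h2 : v ++ r' = s := by
      have := congrArg List.dropLast h1
      simpa using this
    exact h2 ▸ ⟨r', rfl⟩

lemma child_image {X₁ X₂ : Set (List Ordinal.{u})}
    (hpc₂ : ∀ s ∈ X₂, ∀ t : List Ordinal.{u}, t <+: s → t ∈ X₂)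
    (e : {s : List Ordinal.{u} // s ∈ X₁} ≃ {s : List Ordinal.{u} // s ∈ X₂})
    (he : ∀ s t : {s : List Ordinal.{u} // s ∈ X₁},
      ((s : List Ordinal.{u}) <+: (t : List Ordinal.{u}) ∧
          (s : List Ordinal.{u}) ≠ (t : List Ordinal.{u})) ↔
        ((e s : List Ordinal.{u}) <+: (e t : List Ordinal.{u}) ∧
          (e s : List Ordinal.{u}) ≠ (e t : List Ordinal.{u})))
    (s : {s : List Ordinal.{u} // s ∈ X₁}) (α : Ordinal.{u}) (h : (s : List Ordinal.{u}) ++ [α] ∈ X₁) :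
    ∃ β : Ordinal.{u}, ∃ hβ : (e s : List Ordinal.{u}) ++ [β] ∈ X₂,
      e ⟨(s : List Ordinal.{u}) ++ [α], h⟩ = ⟨(e s : List Ordinal.{u}) ++ [β], hβ⟩ := by
  set t := e ⟨(s : List Ordinal.{u}) ++ [α], h⟩ with ht
  have hb : ((s : List Ordinal.{u}) <+: (s : List Ordinal.{u}) ++ [α]) ∧
      (s : List Ordinal.{u}) ≠ (s : List Ordinal.{u}) ++ [α] := ⟨⟨[α], rfl⟩, by simp⟩
  obtain ⟨⟨r, hr⟩, hne⟩ := (he s ⟨_, h⟩).mp hb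
  have hrne : r ≠ [] := by rintro rfl; simp at hr; exact hne hr
  obtain ⟨b, r', rfl⟩ := List.exists_cons_of_ne_nil hrne
  have hu : (e s : List Ordinal.{u}) ++ [b] ∈ X₂ :=
    hpc₂ _ t.2 _ ⟨r', by simpa using hr⟩
  refine ⟨b, hu, ?_⟩
  by_contra hut
  have hutne : (e s : List Ordinal.{u}) ++ [b] ≠ (t : List Ordinal.{u}) :=
    fun hh => hut (Subtype.ext hh.symm)
  set w : {s : List Ordinal.{u} // s ∈ X₂} := ⟨(e s : List Ordinal.{u}) ++ [b], hu⟩ with hw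
  set v := e.symm w with hv
  have hev : e v = w := e.apply_symm_apply w
  have h1 : (v : List Ordinal.{u}) <+: (s : List Ordinal.{u}) ++ [α] ∧
      (v : List Ordinal.{u}) ≠ (s : List Ordinal.{u}) ++ [α] := by
    refine (he v ⟨_, h⟩).mpr ?_
    rw [hev, ← ht]
    exact ⟨⟨r', by simpa [hw, ht] using hr⟩, hutne⟩
  have h2 : (s : List Ordinal.{u}) <+: (v : List Ordinal.{u}) ∧
      (s : List Ordinal.{u}) ≠ (v : List Ordinal.{u}) := by
    refine (he s v).mpr ?_
    rw [hev]
    exact ⟨⟨[b], rfl⟩, by simp [hw]⟩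
  have h3 : (v : List Ordinal.{u}) <+: (s : List Ordinal.{u}) :=
    prefix_of_ne_snoc h1.1 h1.2
  exact h2.2 (antisymm (r := (· <+: ·)) h2.1 h3)

/-- If two well-founded basic codes are order isomorphic with respect to the
proper-prefix relation, then they decode to the same set. -/
theorem decode_eq_of_orderIso (X₁ X₂ : Set (List Ordinal.{u}))
    (h₁ : IsWFCode X₁) (h₂ : IsWFCode X₂)
    (e : {s : List Ordinal.{u} // s ∈ X₁} ≃ {s : List Ordinal.{u} // s ∈ X₂})
    (he : ∀ s t : {s : List Ordinal.{u} // s ∈ X₁},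
      ((s : List Ordinal.{u}) <+: (t : List Ordinal.{u}) ∧
          (s : List Ordinal.{u}) ≠ (t : List Ordinal.{u})) ↔
        ((e s : List Ordinal.{u}) <+: (e t : List Ordinal.{u}) ∧
          (e s : List Ordinal.{u}) ≠ (e t : List Ordinal.{u})))
    (f₁ f₂ : List Ordinal.{u} → ZFSet.{u})
    (hf₁ : IsDecodeFun X₁ f₁) (hf₂ : IsDecodeFun X₂ f₂) :
    f₁ [] = f₂ [] := by
  obtain ⟨⟨hne₁, hpc₁, -⟩, hwf₁⟩ := h₁
  obtain ⟨⟨hne₂, hpc₂, -⟩, hwf₂⟩ := h₂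
  have he' : ∀ u v : {s : List Ordinal.{u} // s ∈ X₂},
      ((u : List Ordinal.{u}) <+: (v : List Ordinal.{u}) ∧
          (u : List Ordinal.{u}) ≠ (v : List Ordinal.{u})) ↔
        ((e.symm u : List Ordinal.{u}) <+: (e.symm v : List Ordinal.{u}) ∧
          (e.symm u : List Ordinal.{u}) ≠ (e.symm v : List Ordinal.{u})) := by
    intro u v
    have := he (e.symm u) (e.symm v)
    rw [e.apply_symm_apply, e.apply_symm_apply] at this
    exact this.symm
  obtain ⟨s₀, hs₀⟩ := hne₁
  have hnil₁ : ([] : List Ordinal.{u}) ∈ X₁ := hpc₁ s₀ hs₀ [] List.nil_prefix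
  obtain ⟨s₀', hs₀'⟩ := hne₂
  have hnil₂ : ([] : List Ordinal.{u}) ∈ X₂ := hpc₂ s₀' hs₀' [] List.nil_prefix
  have hroot : e ⟨[], hnil₁⟩ = ⟨[], hnil₂⟩ := by
    set v := e.symm ⟨[], hnil₂⟩ with hv
    have hveq : (v : List Ordinal.{u}) = [] := by
      by_contra hvne
      have h1 : (([] : List Ordinal.{u}) <+: (v : List Ordinal.{u})) ∧
          ([] : List Ordinal.{u}) ≠ (v : List Ordinal.{u}) :=
        ⟨List.nil_prefix, fun hh => hvne hh.symm⟩
      have := (he ⟨[], hnil₁⟩ v).mp h1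
      rw [e.apply_symm_apply] at this
      exact this.2 (List.prefix_nil.mp this.1)
    have : v = ⟨[], hnil₁⟩ := Subtype.ext hveq
    rw [← this, hv, e.apply_symm_apply]
  have main : ∀ s : {s : List Ordinal.{u} // s ∈ X₁},
      f₁ (s : List Ordinal.{u}) = f₂ ((e s : List Ordinal.{u})) := by
    intro s
    induction s using hwf₁.induction with
    | _ s ih =>
      apply ZFSet.ext
      intro y
      rw [hf₁ _ s.2 y, hf₂ _ (e s).2 y]
      constructor
      · rintro ⟨α, hα, rfl⟩
        obtain ⟨β, hβ, heq⟩ := child_image hpc₂ e he s α hα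
        refine ⟨β, hβ, ?_⟩
        have hih := ih ⟨(s : List Ordinal.{u}) ++ [α], hα⟩ ⟨⟨[α], rfl⟩, by simp⟩
        rw [hih, heq]
      · rintro ⟨β, hβ, rfl⟩
        obtain ⟨α, hα, heq⟩ := child_image hpc₁ e.symm he' (e s) β hβ
        have hs' : e.symm (e s) = s := e.symm_apply_apply s
        have hcoe : ((e.symm (e s) : {s : List Ordinal.{u} // s ∈ X₁}) : List Ordinal.{u})
            = (s : List Ordinal.{u}) := by rw [hs']
        have hα' : (s : List Ordinal.{u}) ++ [α] ∈ X₁ := hcoe ▸ hα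
        have hsub : (⟨((e.symm (e s) : {s // s ∈ X₁}) : List Ordinal.{u}) ++ [α], hα⟩ :
            {s : List Ordinal.{u} // s ∈ X₁}) = ⟨(s : List Ordinal.{u}) ++ [α], hα'⟩ :=
          Subtype.ext (show ((e.symm (e s) : {s // s ∈ X₁}) : List Ordinal.{u}) ++ [α]
            = (s : List Ordinal.{u}) ++ [α] by rw [hcoe])
        rw [hsub] at heq
        have heq' : (⟨(e s : List Ordinal.{u}) ++ [β], hβ⟩ : {s : List Ordinal.{u} // s ∈ X₂})
            = e ⟨(s : List Ordinal.{u}) ++ [α], hα'⟩ := by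
          rw [← heq, e.apply_symm_apply]
        refine ⟨α, hα', ?_⟩
        have hih := ih ⟨(s : List Ordinal.{u}) ++ [α], hα'⟩ ⟨⟨[α], rfl⟩, by simp⟩
        rw [hih, ← heq']
  have hmain := main ⟨[], hnil₁⟩
  rw [hroot] at hmain
  exact hmain
end

section
/- For every x : ZFSet there exists a well-founded basic code X with Decode(X) = x. (The proof uses the axiom of choice, via a well-ordering of the transitive closure of {x}.) -/
universe u

noncomputable section AuxDecode

open Classical in
/-- Every ZFSet has an ordinal-indexed enumeration of its members. -/
private lemma exists_enum (y : ZFSet.{u}) :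
    ∃ (o : Ordinal.{u}) (g : Ordinal.{u} → ZFSet.{u}),
      (∀ α, α < o → g α ∈ y) ∧ (∀ z ∈ y, ∃ α, α < o ∧ g α = z) := by
  classical
  haveI : Small.{u} y.toSet := ZFSet.small_coe y
  let ι : Type u := Shrink y.toSet
  let e : ι ≃ y.toSet := (equivShrink y.toSet).symm
  let r : ι → ι → Prop := WellOrderingRel
  refine ⟨Ordinal.type r,
    fun α => if h : ∃ i : ι, Ordinal.typein r i = α then (e h.choose : ZFSet) else ∅, ?_, ?_⟩
  · intro α hα
    obtain ⟨i, hi⟩ := Ordinal.typein_surj r hα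
    dsimp only
    rw [dif_pos ⟨i, hi⟩]
    exact (e _).2
  · intro z hz
    refine ⟨Ordinal.typein r (e.symm ⟨z, hz⟩), Ordinal.typein_lt_type _ _, ?_⟩
    have h : ∃ i : ι, Ordinal.typein r i = Ordinal.typein r (e.symm ⟨z, hz⟩) :=
      ⟨e.symm ⟨z, hz⟩, rfl⟩
    dsimp only
    rw [dif_pos h]
    have := Ordinal.typein_injective r h.choose_spec
    rw [this]
    simp

private def enumOrd (y : ZFSet.{u}) : Ordinal.{u} := (exists_enum y).choose

private def enumFun (y : ZFSet.{u}) : Ordinal.{u} → ZFSet.{u} :=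
  (exists_enum y).choose_spec.choose

private lemma enumFun_mem {y : ZFSet.{u}} {α : Ordinal.{u}} (h : α < enumOrd y) :
    enumFun y α ∈ y := (exists_enum y).choose_spec.choose_spec.1 α h

private lemma enumFun_surj {y z : ZFSet.{u}} (hz : z ∈ y) :
    ∃ α, α < enumOrd y ∧ enumFun y α = z :=
  (exists_enum y).choose_spec.choose_spec.2 z hz

/-- Follow a path of ordinals from `x`, if possible. -/
private def follow : List Ordinal.{u} → ZFSet.{u} → Option ZFSet.{u}
  | [], x => some x
  | α :: s, x => if α < enumOrd x then follow s (enumFun x α) else none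

private lemma follow_append (s t : List Ordinal.{u}) (x : ZFSet.{u}) :
    follow (s ++ t) x = (follow s x).bind (follow t) := by
  induction s generalizing x with
  | nil => simp [follow]
  | cons α s ih =>
    simp only [List.cons_append, follow]
    split
    · exact ih _
    · rfl

private lemma follow_chain :
    ∀ (t : List Ordinal.{u}) (y z : ZFSet.{u}), t ≠ [] → follow t y = some z →
      Relation.TransGen (· ∈ ·) z y := by
  intro t
  induction t with
  | nil => intro _ _ h; exact absurd rfl h
  | cons α s ih =>
    intro y z _ hf
    simp only [follow] at hf
    split at hf
    · rename_i hlt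
      have hmem : enumFun y α ∈ y := enumFun_mem hlt
      rcases List.eq_nil_or_concat s with rfl | _
      · simp only [follow, Option.some.injEq] at hf
        exact Relation.TransGen.single (hf ▸ hmem)
      · have hne : s ≠ [] := by rintro rfl; simp_all
        exact (ih _ _ hne hf).tail hmem
    · exact absurd hf (by simp)

/-- Every `ZFSet` is encoded by some well-founded basic code. -/
theorem exists_wfCode_decode_eq (x : ZFSet.{u}) :
    ∃ X : Set (List Ordinal.{u}), IsWFCode X ∧
      ∃ f : List Ordinal.{u} → ZFSet.{u}, IsDecodeFun X f ∧ f [] = x := by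
  classical
  set X : Set (List Ordinal.{u}) := {s | (follow s x).isSome} with hX
  set f : List Ordinal.{u} → ZFSet.{u} := fun s => (follow s x).getD ∅ with hf
  have hmemX : ∀ s, s ∈ X ↔ ∃ y, follow s x = some y := by
    intro s
    rw [hX]
    simp only [Set.mem_setOf_eq, Option.isSome_iff_exists]
  have hfval : ∀ {s y}, follow s x = some y → f s = y := by
    intro s y h; simp [hf, h]
  -- key: membership of s ++ [α]
  have hsingle : ∀ (y : ZFSet.{u}) (α : Ordinal.{u}),
      follow [α] y = if α < enumOrd y then some (enumFun y α) else none := by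
    intro y α; rfl
  have happ : ∀ (s : List Ordinal.{u}) (α : Ordinal.{u}) {y : ZFSet.{u}},
      follow s x = some y →
      follow (s ++ [α]) x = if α < enumOrd y then some (enumFun y α) else none := by
    intro s α y hy
    rw [follow_append, hy, Option.bind_some, hsingle]
  refine ⟨X, ⟨⟨⟨[], by simp [hX, follow]⟩, ?_, ?_⟩, ?_⟩, f, ?_, hfval rfl⟩
  · -- prefix closed
    intro s hs t ht
    obtain ⟨r, rfl⟩ := ht
    obtain ⟨y, hy⟩ := (hmemX _).1 hs
    rw [follow_append] at hy
    rcases h : follow t x with _ | z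
    · rw [h] at hy; simp at hy
    · exact (hmemX t).2 ⟨z, h⟩
  · -- no gaps
    intro s α₁ α₂ h12 h2
    obtain ⟨y, hy⟩ := (hmemX _).1 h2
    have hsX : s ∈ X := by
      refine (hmemX s).2 ?_
      rw [follow_append] at hy
      rcases h : follow s x with _ | z
      · rw [h] at hy; simp at hy
      · exact ⟨z, rfl⟩
    obtain ⟨z, hz⟩ := (hmemX s).1 hsX
    rw [happ s α₂ hz] at hy
    have hlt : α₂ < enumOrd z := by by_contra h; rw [if_neg h] at hy; cases hy
    refine (hmemX _).2 ?_
    rw [happ s α₁ hz, if_pos (h12.trans hlt)]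
    exact ⟨_, rfl⟩
  · -- well-founded
    have hwf : WellFounded (Relation.TransGen ((· ∈ ·) : ZFSet.{u} → ZFSet.{u} → Prop)) :=
      ZFSet.mem_wf.transGen
    refine Subrelation.wf (r := InvImage (Relation.TransGen (· ∈ ·)) fun η : {s // s ∈ X} => f η.1)
      ?_ (InvImage.wf _ hwf)
    rintro ν η ⟨⟨t, hteq⟩, hne⟩
    obtain ⟨yη, hyη⟩ := (hmemX _).1 η.2
    obtain ⟨yν, hyν⟩ := (hmemX _).1 ν.2
    have htne : t ≠ [] := by rintro rfl; exact hne (by simpa using hteq)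
    have : follow t yη = some yν := by
      rw [← hteq, follow_append, hyη, Option.bind_some] at hyν
      exact hyν
    have hch := follow_chain t yη yν htne this
    show Relation.TransGen (· ∈ ·) (f ν.1) (f η.1)
    rw [hfval hyν, hfval hyη]
    exact hch
  · -- decode function
    intro s hs y
    obtain ⟨y₀, hy₀⟩ := (hmemX s).1 hs
    rw [hfval hy₀]
    constructor
    · intro hy
      obtain ⟨α, hα, hgα⟩ := enumFun_surj hy
      have hfoll : follow (s ++ [α]) x = some (enumFun y₀ α) := by
        rw [happ s α hy₀, if_pos hα]
      exact ⟨α, (hmemX _).2 ⟨_, hfoll⟩, by rw [hfval hfoll, hgα]⟩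
    · rintro ⟨α, hαX, rfl⟩
      obtain ⟨z, hz⟩ := (hmemX _).1 hαX
      rw [happ s α hy₀] at hz
      have hlt : α < enumOrd y₀ := by
        by_contra h; rw [if_neg h] at hz; cases hz
      rw [if_pos hlt] at hz
      rw [hfval ((happ s α hy₀).trans (if_pos hlt))]
      exact enumFun_mem hlt

end AuxDecode
end

section
/- Let X be a well-founded basic code and define the tree rank ρ_X : X → Ordinal by well-founded recursion: ρ_X(η) is the supremum of ρ_X(η ++ [α]) + 1 over those ordinals α with η ++ [α] ∈ X (so leaves have tree rank 0). Then the code rank mirrors set-theoretic rank: for every η ∈ X, ZFSet.rank (decode_X(η)) = ρ_X(η); in particular ZFSet.rank (Decode(X)) = ρ_X([]). -/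
universe u

/-- `r` satisfies the defining recurrence of the tree rank function of the code `X`:
`r s` is the least upper bound of the ordinals `r (s ++ [α]) + 1` over those `α`
with `s ++ [α] ∈ X` (so leaves get tree rank `0`). -/
def IsRankFun (X : Set (List Ordinal.{u})) (r : List Ordinal.{u} → Ordinal.{u}) : Prop :=
  ∀ s ∈ X,
    IsLUB {o : Ordinal.{u} | ∃ α : Ordinal.{u}, s ++ [α] ∈ X ∧ o = r (s ++ [α]) + 1} (r s)

/-- The tree rank of a node of a well-founded basic code equals the set-theoretic rank of
the set it decodes to; in particular the rank of `Decode X` is the tree rank of the root. -/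
theorem rank_decode_eq_treeRank (X : Set (List Ordinal.{u})) (hX : IsWFCode X)
    (f : List Ordinal.{u} → ZFSet.{u}) (hf : IsDecodeFun X f)
    (r : List Ordinal.{u} → Ordinal.{u}) (hr : IsRankFun X r) :
    (∀ s ∈ X, ZFSet.rank (f s) = r s) ∧ ZFSet.rank (f []) = r [] := by

  have hmain : ∀ s ∈ X, ZFSet.rank (f s) = r s := by
    intro s hs
    have : ∀ η : {s : List Ordinal.{u} // s ∈ X}, ZFSet.rank (f η.1) = r η.1 := by
      intro η
      induction η using hX.2.induction with
      | _ η IH =>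
        apply le_antisymm
        · rw [ZFSet.rank_le_iff]
          intro y hy
          obtain ⟨α, hα, rfl⟩ := (hf η.1 η.2 y).1 hy
          have hb : Below X ⟨η.1 ++ [α], hα⟩ η :=
            ⟨⟨[α], rfl⟩, by simp⟩
          have := IH _ hb
          simp only at this
          rw [this]
          have := (hr η.1 η.2).1 ⟨α, hα, rfl⟩
          exact lt_of_lt_of_le (Order.lt_succ _) this
        · apply (hr η.1 η.2).2
          rintro o ⟨α, hα, rfl⟩
          have hb : Below X ⟨η.1 ++ [α], hα⟩ η :=
            ⟨⟨[α], rfl⟩, by simp⟩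
          have h1 := IH _ hb
          simp only at h1
          rw [← h1]
          have hmem : f (η.1 ++ [α]) ∈ f η.1 :=
            (hf η.1 η.2 _).2 ⟨α, hα, rfl⟩
          exact (ZFSet.rank_lt_of_mem hmem).succ_le
    exact this ⟨s, hs⟩
  refine ⟨hmain, ?_⟩
  obtain ⟨s, hs⟩ := hX.1.1
  exact hmain [] (hX.1.2.1 s hs [] ⟨s, rfl⟩)
end

section
/- Let X be a well-founded basic code. Then the image of decode_X (the set {decode_X(η) | η ∈ X} ⊆ ZFSet) is exactly the transitive closure of {Decode(X)}, i.e. the smallest set T : Set ZFSet such that Decode(X) ∈ T and such that whenever y ∈ T and z is a ZFSet-member of y, then z ∈ T. In other words, the basic code mirrors the transitive closure of the set it encodes. -/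
universe u

/-- The image of the decode function of a well-founded basic code `X` is exactly the
transitive closure of `{Decode X}`, i.e. the smallest collection of `ZFSet`s containing
`Decode X` and closed under membership. -/
theorem decode_image_eq_transitiveClosure (X : Set (List Ordinal.{u})) (hX : IsWFCode X)
    (f : List Ordinal.{u} → ZFSet.{u}) (hf : IsDecodeFun X f) :
    {y : ZFSet.{u} | ∃ s ∈ X, y = f s} =
      ⋂₀ {T : Set ZFSet.{u} | f [] ∈ T ∧ ∀ y ∈ T, ∀ z : ZFSet.{u}, z ∈ y → z ∈ T} := by
  obtain ⟨⟨⟨s₀, hs₀⟩, hpre, _⟩, _⟩ := hX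
  have hnil : ([] : List Ordinal.{u}) ∈ X := hpre s₀ hs₀ [] List.nil_prefix
  apply Set.Subset.antisymm
  · rintro y ⟨s, hs, rfl⟩ T ⟨hT0, hTcl⟩

    induction s using List.reverseRecOn with
    | nil => exact hT0
    | append_singleton s α ih =>
      have hsX : s ∈ X := hpre _ hs s ⟨[α], rfl⟩
      exact hTcl (f s) (ih hsX) (f (s ++ [α]))
        ((hf s hsX (f (s ++ [α]))).2 ⟨α, hs, rfl⟩)
  · intro y hy
    exact hy _ ⟨⟨[], hnil, rfl⟩, by rintro _ ⟨s, hs, rfl⟩ z hz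
                                    obtain ⟨α, hα, rfl⟩ := (hf s hs z).1 hz
                                    exact ⟨s ++ [α], hα, rfl⟩⟩
end

section
/- For every ordinal α, the set 𝒪_α := {s : List Ordinal | s is strictly decreasing and every entry of s is < α} is a well-founded basic code, and it is the canonical code of the α-th von Neumann ordinal in the following sense: for every y : ZFSet, y is a member of Decode(𝒪_α) if and only if there exists β < α with y = Decode(𝒪_β). -/
universe u

/-- The canonical code of the `α`-th von Neumann ordinal: the set of strictly decreasing
lists of ordinals all of whose entries are `< α`. -/
def ordCode (α : Ordinal.{u}) : Set (List Ordinal.{u}) :=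
  {s : List Ordinal.{u} | List.Chain' (· > ·) s ∧ ∀ β ∈ s, β < α}

/-- The von Neumann hierarchy of ordinals inside `ZFSet`. -/
noncomputable def ordV (α : Ordinal.{u}) : ZFSet.{u} :=
  ZFSet.range.{u, u} (Ordinal.familyOfBFamily α fun β (_ : β < α) => ordV β)
termination_by α
decreasing_by assumption

theorem mem_ordV {α : Ordinal.{u}} {y : ZFSet.{u}} : y ∈ ordV α ↔ ∃ β < α, y = ordV β := by
  rw [ordV, ZFSet.mem_range, ← Set.mem_range, Ordinal.range_familyOfBFamily]
  constructor
  · rintro ⟨β, hβ, rfl⟩; exact ⟨β, hβ, rfl⟩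
  · rintro ⟨β, hβ, rfl⟩; exact ⟨β, hβ, rfl⟩

theorem nil_mem_ordCode (α : Ordinal.{u}) : [] ∈ ordCode α :=
  ⟨List.isChain_nil, by simp⟩

theorem mem_ordCode_append {α γ : Ordinal.{u}} {s : List Ordinal.{u}} (hs : s ∈ ordCode α) :
    s ++ [γ] ∈ ordCode α ↔ γ < s.getLastD α := by
  obtain ⟨hc, hlt⟩ := hs
  rcases eq_or_ne s [] with rfl | hne
  · simp [ordCode]; exact fun _ => List.isChain_singleton γ
  · have hgl : s.getLastD α = s.getLast hne := by
      rw [List.getLastD_eq_getLast?, List.getLast?_eq_getLast hne]; rfl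
    constructor
    · rintro ⟨hc', hlt'⟩
      have := (List.isChain_append.mp hc').2.2 (s.getLast hne)
        (by rw [List.getLast?_eq_getLast hne]; rfl) γ rfl
      rwa [hgl]
    · intro hγ
      rw [hgl] at hγ
      refine ⟨List.isChain_append.mpr ⟨hc, List.isChain_singleton γ, ?_⟩, ?_⟩
      · intro x hx y hy
        rw [List.getLast?_eq_getLast hne] at hx
        obtain rfl : x = s.getLast hne := by simpa using hx.symm
        obtain rfl : y = γ := by simpa using hy.symm
        exact hγ
      · intro β hβ
        rcases List.mem_append.mp hβ with h | h
        · exact hlt β h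
        · obtain rfl : β = γ := by simpa using h
          exact hγ.trans (hlt _ (List.getLast_mem hne))

theorem cons_mem_ordCode {α γ : Ordinal.{u}} (hγ : γ < α) (s : List Ordinal.{u}) :
    γ :: s ∈ ordCode α ↔ s ∈ ordCode γ := by
  simp only [ordCode, Set.mem_setOf_eq, List.Chain', List.isChain_iff_pairwise, List.pairwise_cons]
  constructor
  · rintro ⟨⟨hγs, hp⟩, _⟩
    exact ⟨hp, fun b hb => hγs b hb⟩
  · rintro ⟨hp, hlt⟩
    refine ⟨⟨fun b hb => hlt b hb, hp⟩, ?_⟩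
    intro b hb
    rcases List.mem_cons.mp hb with rfl | hb
    · exact hγ
    · exact (hlt b hb).trans hγ

theorem decode_shift {α γ : Ordinal.{u}} {f : List Ordinal.{u} → ZFSet.{u}}
    (hf : IsDecodeFun (ordCode α) f) (hγ : γ < α) :
    IsDecodeFun (ordCode γ) (fun s => f (γ :: s)) := by
  intro s hs y
  have h1 : γ :: s ∈ ordCode α := (cons_mem_ordCode hγ s).mpr hs
  have h2 := hf (γ :: s) h1 y
  simpa only [List.cons_append, cons_mem_ordCode hγ] using h2

theorem decode_eq_ordV : ∀ (α : Ordinal.{u}) (f : List Ordinal.{u} → ZFSet.{u}),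
    IsDecodeFun (ordCode α) f → f [] = ordV α := by
  intro α
  induction α using Ordinal.induction with
  | h α IH =>
    intro f hf
    apply ZFSet.ext
    intro y
    rw [mem_ordV, hf [] (nil_mem_ordCode α) y]
    constructor
    · rintro ⟨γ, hγmem, rfl⟩
      have hγ : γ < α := hγmem.2 γ (by simp)
      have := IH γ hγ _ (decode_shift hf hγ)
      exact ⟨γ, hγ, by simpa using this⟩
    · rintro ⟨β, hβ, rfl⟩
      have hmem : ([] : List Ordinal.{u}) ++ [β] ∈ ordCode α := by
        rw [mem_ordCode_append (nil_mem_ordCode α)]; simpa using hβ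
      have := IH β hβ _ (decode_shift hf hβ)
      exact ⟨β, hmem, by simpa using this.symm⟩

/-- For every ordinal `α`, `ordCode α` is a well-founded basic code, it has a decode
function, and it decodes to the `α`-th von Neumann ordinal: the members of
`Decode (ordCode α)` are exactly the sets `Decode (ordCode β)` for `β < α`. -/
theorem ordCode_isWFCode_and_decode (α : Ordinal.{u}) :
    IsWFCode (ordCode α) ∧
    (∃ f : List Ordinal.{u} → ZFSet.{u}, IsDecodeFun (ordCode α) f) ∧
    ∀ f : List Ordinal.{u} → ZFSet.{u}, IsDecodeFun (ordCode α) f →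
      ∀ y : ZFSet.{u}, y ∈ f [] ↔
        ∃ β : Ordinal.{u}, β < α ∧
          ∃ g : List Ordinal.{u} → ZFSet.{u}, IsDecodeFun (ordCode β) g ∧ y = g [] := by
  refine ⟨⟨⟨⟨[], nil_mem_ordCode α⟩, ?_, ?_⟩, ?_⟩, ⟨fun s => ordV (s.getLastD α), ?_⟩, ?_⟩
  · -- prefix closed
    rintro s ⟨hc, hlt⟩ t ht
    refine ⟨List.isChain_iff_pairwise.mpr
      ((List.isChain_iff_pairwise.mp hc).sublist ht.sublist), ?_⟩
    exact fun β hβ => hlt β (ht.sublist.mem hβ)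
  · -- no gaps
    intro s α₁ α₂ h12 h2
    have hs : s ∈ ordCode α := by
      rcases h2 with ⟨hc, hlt⟩
      exact ⟨List.isChain_iff_pairwise.mpr
          ((List.isChain_iff_pairwise.mp hc).sublist (List.prefix_append s [α₂]).sublist),
        fun β hβ => hlt β (List.mem_append.mpr (Or.inl hβ))⟩
    rw [mem_ordCode_append hs] at h2 ⊢
    exact h12.trans h2
  · -- well-founded
    refine Subrelation.wf (r := InvImage (· < ·)
      (fun s : {s : List Ordinal.{u} // s ∈ ordCode α} => (s : List Ordinal.{u}).getLastD α))
      ?_ (InvImage.wf _ Ordinal.lt_wf)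
    rintro ⟨ν, hν⟩ ⟨η, hη⟩ ⟨⟨t, rfl⟩, hne⟩
    have ht : t ≠ [] := by rintro rfl; simp at hne
    have hpw : List.Pairwise (· > ·) (η ++ t) := List.isChain_iff_pairwise.mp hν.1
    show (η ++ t).getLastD α < η.getLastD α
    have h1 : (η ++ t).getLastD α = t.getLast ht := by
      rw [List.getLastD_eq_getLast?, List.getLast?_append_of_ne_nil η ht,
        List.getLast?_eq_getLast ht]; rfl
    rcases eq_or_ne η [] with rfl | hηne
    · rw [h1]
      simpa using hν.2 _ (List.getLast_mem ht)
    · have h2 : η.getLastD α = η.getLast hηne := by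
        rw [List.getLastD_eq_getLast?, List.getLast?_eq_getLast hηne]; rfl
      rw [h1, h2]
      exact (List.pairwise_append.mp hpw).2.2 _ (List.getLast_mem hηne) _ (List.getLast_mem ht)
  · -- existence of decode function
    intro s hs y
    rw [mem_ordV]
    constructor
    · rintro ⟨β, hβ, rfl⟩
      exact ⟨β, (mem_ordCode_append hs).mpr hβ, by simp⟩
    · rintro ⟨β, hβ, rfl⟩
      exact ⟨β, (mem_ordCode_append hs).mp hβ, by simp⟩
  · -- decoding to the von Neumann ordinal
    intro f hf y
    rw [hf [] (nil_mem_ordCode α) y]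
    constructor
    · rintro ⟨γ, hγmem, rfl⟩
      have hγ : γ < α := hγmem.2 γ (by simp)
      refine ⟨γ, hγ, fun s => f (γ :: s), decode_shift hf hγ, by simp⟩
    · rintro ⟨β, hβ, g, hg, rfl⟩
      have hmem : ([] : List Ordinal.{u}) ++ [β] ∈ ordCode α := by
        rw [mem_ordCode_append (nil_mem_ordCode α)]; simpa using hβ
      refine ⟨β, hmem, ?_⟩
      have h1 := decode_eq_ordV β g hg
      have h2 := decode_eq_ordV β _ (decode_shift hf hβ)
      rw [h1]
      simpa using h2.symm
end

section
/- For every ordinal α, with 𝒪_α := {s : List Ordinal | s is strictly decreasing and every entry of s is < α} (a well-founded basic code), one has ZFSet.rank (Decode(𝒪_α)) = α. Consequently the map α ↦ Decode(𝒪_α) is injective: distinct ordinals have distinct canonical representative sets. -/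
universe u

/-- The von Neumann ordinal `o` as a `ZFSet`. -/
noncomputable def ordZF : Ordinal.{u} → ZFSet.{u}
  | o => ZFSet.range.{u, u} (fun i : o.ToType =>
      ordZF (@Ordinal.typein o.ToType (· < ·) isWellOrder_lt i))
  termination_by o => o
  decreasing_by exact Ordinal.typein_lt_self i

theorem mem_ordZF {x : ZFSet.{u}} {o : Ordinal.{u}} :
    x ∈ ordZF o ↔ ∃ β < o, x = ordZF β := by
  rw [ordZF, ZFSet.mem_range]
  constructor
  · rintro ⟨i, rfl⟩
    exact ⟨_, Ordinal.typein_lt_self i, rfl⟩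
  · rintro ⟨β, hβ, rfl⟩
    obtain ⟨i, rfl⟩ := @Ordinal.typein_surj o.ToType (· < ·) isWellOrder_lt β
      (by rwa [Ordinal.type_toType])
    exact ⟨i, rfl⟩

theorem rank_ordZF (o : Ordinal.{u}) : ZFSet.rank (ordZF o) = o := by
  induction o using Ordinal.induction with
  | h o IH =>
    apply le_antisymm
    · rw [ZFSet.rank_le_iff]
      intro y hy
      obtain ⟨β, hβ, rfl⟩ := mem_ordZF.1 hy
      rwa [IH β hβ]
    · refine le_of_forall_lt fun β hβ => ?_
      have : ordZF β ∈ ordZF o := mem_ordZF.2 ⟨β, hβ, rfl⟩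
      simpa [IH β hβ] using ZFSet.rank_lt_of_mem this

theorem append_mem_ordCode {α : Ordinal.{u}} {s : List Ordinal.{u}} (hs : s ∈ ordCode α)
    (γ : Ordinal.{u}) : s ++ [γ] ∈ ordCode α ↔ γ < s.getLastD α := by
  obtain ⟨hc, hb⟩ := hs
  rw [List.Chain', List.isChain_iff_pairwise] at hc
  constructor
  · rintro ⟨hc', hb'⟩
    rcases s.eq_nil_or_concat with rfl | ⟨t, a, rfl⟩
    · simpa using hb' γ (by simp)
    · rw [List.concat_eq_append, List.getLastD_concat]
      rw [List.concat_eq_append, List.Chain', List.isChain_iff_pairwise, List.pairwise_append] at hc'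
      simpa using (hc'.2.2 a (by simp) γ (by simp))
  · intro hγ
    rcases s.eq_nil_or_concat with rfl | ⟨t, a, rfl⟩
    · refine ⟨by simp [List.Chain'], ?_⟩
      intro β hβ
      simp only [List.nil_append, List.mem_singleton] at hβ
      subst hβ
      simpa using hγ
    · rw [List.concat_eq_append, List.getLastD_concat] at hγ
      rw [List.concat_eq_append] at hb hc ⊢
      rw [List.pairwise_append] at hc
      constructor
      · rw [List.Chain', List.isChain_iff_pairwise, List.append_assoc, List.pairwise_append]
        refine ⟨hc.1, ?_, ?_⟩
        · simp only [List.cons_append, List.nil_append]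
          refine List.pairwise_cons.2 ⟨?_, List.pairwise_singleton _ _⟩
          intro b hb'
          obtain rfl : b = γ := by simpa using hb'
          exact hγ
        · intro x hx b hb'
          simp only [List.cons_append, List.nil_append, List.mem_cons,
            List.mem_singleton, List.not_mem_nil, or_false] at hb'
          rcases hb' with rfl | rfl
          · exact hc.2.2 x hx b (by simp)
          · exact lt_trans hγ (hc.2.2 x hx a (by simp))
      · intro β hβ
        rw [List.append_assoc] at hβ
        rcases List.mem_append.1 hβ with h | h
        · exact hb β (List.mem_append.2 (Or.inl h))
        · simp only [List.cons_append, List.nil_append, List.mem_cons,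
            List.mem_singleton, List.not_mem_nil, or_false] at h
          rcases h with rfl | rfl
          · exact hb β (by simp)
          · exact lt_trans hγ (hb a (by simp))

theorem decodeFun_eq {α : Ordinal.{u}} {f : List Ordinal.{u} → ZFSet.{u}}
    (hf : IsDecodeFun (ordCode α) f) :
    ∀ b : Ordinal.{u}, ∀ s ∈ ordCode α, s.getLastD α = b → f s = ordZF b := by
  intro b
  induction b using Ordinal.induction with
  | h b IH =>
    intro s hs hsb
    apply ZFSet.ext
    intro y
    rw [hf s hs y, mem_ordZF]
    constructor
    · rintro ⟨γ, hγ, rfl⟩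
      have hγb : γ < b := hsb ▸ (append_mem_ordCode ⟨(by
        exact (Set.mem_setOf_eq ▸ hs).1), (Set.mem_setOf_eq ▸ hs).2⟩ γ).1 hγ
      exact ⟨γ, hγb, IH γ hγb _ hγ List.getLastD_concat⟩
    · rintro ⟨γ, hγb, rfl⟩
      have hγ : s ++ [γ] ∈ ordCode α := (append_mem_ordCode hs γ).2 (hsb ▸ hγb)
      exact ⟨γ, hγ, (IH γ hγb _ hγ List.getLastD_concat).symm⟩

/-- `Decode (ordCode α)` has set-theoretic rank `α`; consequently the map
`α ↦ Decode (ordCode α)` is injective. -/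
theorem rank_decode_ordCode (α : Ordinal.{u}) :
    (∃ f : List Ordinal.{u} → ZFSet.{u}, IsDecodeFun (ordCode α) f) ∧
    (∀ f : List Ordinal.{u} → ZFSet.{u}, IsDecodeFun (ordCode α) f →
      ZFSet.rank (f []) = α) ∧
    (∀ β : Ordinal.{u},
      ∀ f g : List Ordinal.{u} → ZFSet.{u},
        IsDecodeFun (ordCode α) f → IsDecodeFun (ordCode β) g →
          f [] = g [] → α = β) := by
  have key : ∀ (δ : Ordinal.{u}) (f : List Ordinal.{u} → ZFSet.{u}),
      IsDecodeFun (ordCode δ) f → f [] = ordZF δ := by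
    intro δ f hf
    exact decodeFun_eq hf δ [] (nil_mem_ordCode δ) rfl
  refine ⟨⟨fun s => ordZF (s.getLastD α), ?_⟩, ?_, ?_⟩
  · intro s hs y
    simp only []
    rw [mem_ordZF]
    constructor
    · rintro ⟨γ, hγ, rfl⟩
      exact ⟨γ, (append_mem_ordCode hs γ).2 hγ, by simp [List.getLastD_concat]⟩
    · rintro ⟨γ, hγ, rfl⟩
      exact ⟨γ, (append_mem_ordCode hs γ).1 hγ, by simp [List.getLastD_concat]⟩
  · intro f hf
    rw [key α f hf, rank_ordZF]
  · intro β f g hf hg h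
    have h2 := (key α f hf).symm.trans (h.trans (key β g hg))
    have h3 := congrArg ZFSet.rank h2
    rwa [rank_ordZF, rank_ordZF] at h3
end

section
/- The transitive closure function trcl : ZFSet → ZFSet, the unique function satisfying trcl(x) = x ∪ ⋃_{y ∈ x} trcl(y) (equivalently, trcl(x) is the smallest transitive ZFSet containing x as a subset), is a primitive recursive set function. -/
universe u

open scoped Classical

/-- The primitive recursive set functions of Jensen–Karp: the smallest collection of
functions `(Fin n → ZFSet) → ZFSet` containing the constant `∅` function, the
projections, `(x, y) ↦ x ∪ {y}` and the membership conditional, and closed under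
substitution of a function into one argument slot and under the recursion scheme
`F(x̄, z) = G(⋃ {F(x̄, u) | u ∈ z}, x̄, z)`. -/
inductive PrimRecSet : {n : ℕ} → ((Fin n → ZFSet.{u}) → ZFSet.{u}) → Prop
  /-- The constant function with value `∅`. -/
  | empty : PrimRecSet (n := 1) fun _ => ∅
  /-- The projections `P_{n,i}`. -/
  | proj {n : ℕ} (i : Fin n) : PrimRecSet fun x => x i
  /-- The binary function `(x, y) ↦ x ∪ {y}`. -/
  | adjoin : PrimRecSet (n := 2) fun x => x 0 ∪ {x 1}
  /-- The conditional `C(x, y, u, v)`, equal to `u` if `x ∈ y` and to `v` otherwise. -/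
  | cond : PrimRecSet (n := 4) fun x => if x 0 ∈ x 1 then x 2 else x 3
  /-- Composition in the first slot: `F(x̄, ȳ) = G(H(x̄), ȳ)`. -/
  | comp₁ {m k : ℕ} {G : (Fin (k + 1) → ZFSet.{u}) → ZFSet.{u}}
      {H : (Fin m → ZFSet.{u}) → ZFSet.{u}} :
      PrimRecSet G → PrimRecSet H →
      PrimRecSet (n := m + k) fun x =>
        G (Fin.cons (H fun i => x (Fin.castAdd k i)) fun j => x (Fin.natAdd m j))
  /-- Composition in a middle slot: `F(x̄, ȳ) = G(x̄, H(x̄), ȳ)`. -/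
  | comp₂ {m k : ℕ} {G : (Fin (m + 1 + k) → ZFSet.{u}) → ZFSet.{u}}
      {H : (Fin m → ZFSet.{u}) → ZFSet.{u}} :
      PrimRecSet G → PrimRecSet H →
      PrimRecSet (n := m + k) fun x =>
        G (Fin.append
            (Fin.snoc (fun i : Fin m => x (Fin.castAdd k i))
              (H fun i => x (Fin.castAdd k i)))
            fun j : Fin k => x (Fin.natAdd m j))
  /-- The recursion scheme: if `G` is primitive recursive of arity `n + 2`, then so is the
  unique `F` of arity `n + 1` satisfying
  `F(x̄, z) = G(⋃ {F(x̄, u) | u ∈ z}, x̄, z)`, where the first argument is the `ZFSet`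
  whose members are exactly the members of the values `F(x̄, u)` for `u ∈ z`. -/
  | recursion {n : ℕ} {G : (Fin (n + 2) → ZFSet.{u}) → ZFSet.{u}}
      {F : (Fin (n + 1) → ZFSet.{u}) → ZFSet.{u}} :
      PrimRecSet G →
      (∀ (x : Fin n → ZFSet.{u}) (z U : ZFSet.{u}),
        (∀ w : ZFSet.{u}, w ∈ U ↔ ∃ u ∈ z, w ∈ F (Fin.snoc x u)) →
        F (Fin.snoc x z) = G (Fin.cons U (Fin.snoc x z))) →
      PrimRecSet F


namespace TrclAux

noncomputable def zimg (f : ZFSet.{u} → ZFSet.{u}) (x : ZFSet.{u}) : ZFSet.{u} :=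
  @ZFSet.image f (Classical.allZFSetDefinable _) x

theorem mem_zimg {f : ZFSet.{u} → ZFSet.{u}} {x y : ZFSet.{u}} :
    y ∈ zimg f x ↔ ∃ z ∈ x, f z = y :=
  @ZFSet.mem_image f (Classical.allZFSetDefinable _) x y

theorem zimg_congr {f g : ZFSet.{u} → ZFSet.{u}} {x : ZFSet.{u}}
    (h : ∀ u ∈ x, f u = g u) : zimg f x = zimg g x := by
  apply ZFSet.ext
  intro w
  simp only [mem_zimg]
  constructor
  · rintro ⟨z, hz, rfl⟩; exact ⟨z, hz, (h z hz).symm⟩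
  · rintro ⟨z, hz, rfl⟩; exact ⟨z, hz, h z hz⟩

theorem mem_sUnion_zimg {f : ZFSet.{u} → ZFSet.{u}} {x w : ZFSet.{u}} :
    w ∈ ZFSet.sUnion (zimg f x) ↔ ∃ y ∈ x, w ∈ f y := by
  simp only [ZFSet.mem_sUnion, mem_zimg]
  constructor
  · rintro ⟨z, ⟨y, hy, rfl⟩, hw⟩; exact ⟨y, hy, hw⟩
  · rintro ⟨y, hy, hw⟩; exact ⟨f y, ⟨y, hy, rfl⟩, hw⟩

noncomputable def trcl : ZFSet.{u} → ZFSet.{u} :=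
  ZFSet.mem_wf.fix fun x IH =>
    x ∪ ZFSet.sUnion (zimg (fun y => if h : y ∈ x then IH y h else ∅) x)

theorem trcl_eq (x : ZFSet.{u}) : trcl x = x ∪ ZFSet.sUnion (zimg trcl x) := by
  rw [trcl, WellFounded.fix_eq]
  congr 1
  exact congrArg ZFSet.sUnion (zimg_congr fun u hu => by rw [dif_pos hu])

theorem mem_trcl {x w : ZFSet.{u}} : w ∈ trcl x ↔ w ∈ x ∨ ∃ y ∈ x, w ∈ trcl y := by
  rw [trcl_eq x, ZFSet.mem_union, mem_sUnion_zimg]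


/-- `tc1 z = {z} ∪ trcl z`, the transitive closure of `{z}`. -/
noncomputable def tc1 (z : ZFSet.{u}) : ZFSet.{u} := trcl z ∪ {z}

theorem mem_tc1 {z w : ZFSet.{u}} : w ∈ tc1 z ↔ w ∈ trcl z ∨ w = z := by
  rw [tc1, ZFSet.mem_union, ZFSet.mem_singleton]

/-- The auxiliary function `Fz p z = tc1 z` if `z ∈ p`, else `⋃ {Fz p u | u ∈ z}`. -/
noncomputable def Fz (p : ZFSet.{u}) : ZFSet.{u} → ZFSet.{u} :=
  ZFSet.mem_wf.fix fun z IH =>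
    if z ∈ p then tc1 z
    else ZFSet.sUnion (zimg (fun u => if h : u ∈ z then IH u h else ∅) z)

theorem Fz_eq (p z : ZFSet.{u}) :
    Fz p z = if z ∈ p then tc1 z else ZFSet.sUnion (zimg (Fz p) z) := by
  rw [Fz, WellFounded.fix_eq]
  by_cases h : z ∈ p
  · rw [if_pos h, if_pos h]
  · rw [if_neg h, if_neg h]
    exact congrArg ZFSet.sUnion (zimg_congr fun u hu => by rw [dif_pos hu])

theorem Fz_mem {p z : ZFSet.{u}} (h : z ∈ p) : Fz p z = tc1 z := by
  rw [Fz_eq, if_pos h]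

theorem Fz_diag (z : ZFSet.{u}) : Fz z z = trcl z := by
  rw [Fz_eq, if_neg (ZFSet.mem_irrefl z)]
  apply ZFSet.ext
  intro w
  rw [mem_sUnion_zimg, mem_trcl]
  constructor
  · rintro ⟨y, hy, hw⟩
    rw [Fz_mem hy, mem_tc1] at hw
    rcases hw with hw | rfl
    · exact Or.inr ⟨y, hy, hw⟩
    · exact Or.inl hy
  · rintro (hw | ⟨y, hy, hw⟩)
    · exact ⟨w, hw, by rw [Fz_mem hw, mem_tc1]; exact Or.inr rfl⟩
    · exact ⟨y, hy, by rw [Fz_mem hy, mem_tc1]; exact Or.inl hw⟩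

end TrclAux


theorem Fin.append_apply' {M N : ℕ} {α : Sort*} (u : Fin M → α) (v : Fin N → α)
    (i : Fin (M + N)) :
    Fin.append u v i = if h : (i : ℕ) < M then u ⟨i, h⟩ else v ⟨(i : ℕ) - M, by omega⟩ := by
  by_cases h : (i : ℕ) < M
  · rw [dif_pos h, ← Fin.append_left u v ⟨(i : ℕ), h⟩]
    exact congrArg (Fin.append u v) (Fin.ext rfl)
  · rw [dif_neg h, ← Fin.append_right u v ⟨(i : ℕ) - M, by omega⟩]
    exact congrArg (Fin.append u v) (Fin.ext (by simp; omega))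

theorem Fin.snoc_apply' {M : ℕ} {α : Sort*} (p : Fin M → α) (x : α) (i : Fin (M + 1)) :
    Fin.snoc (α := fun _ => α) p x i = if h : (i : ℕ) < M then p ⟨i, h⟩ else x := by
  by_cases h : (i : ℕ) < M
  · rw [dif_pos h,
      ← Fin.snoc_castSucc (α := fun _ => α) (p := p) (x := x) (i := ⟨(i : ℕ), h⟩)]
    exact congrArg (Fin.snoc p x) (Fin.ext rfl)
  · rw [dif_neg h, show i = Fin.last M from Fin.ext (by simpa using by omega)]
    exact Fin.snoc_last (α := fun _ => α) (p := p) (x := x)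

theorem PrimRecSet.arity_pos : ∀ {n : ℕ} {F : (Fin n → ZFSet.{u}) → ZFSet.{u}},
    PrimRecSet F → 0 < n := by
  intro n F h
  induction h with
  | empty => omega
  | proj i => exact i.pos
  | adjoin => omega
  | cond => omega
  | comp₁ hG hH ihG ihH => omega
  | comp₂ hG hH ihG ihH => omega
  | recursion hG hF ih => omega

theorem PrimRecSet.cast {n m : ℕ} (h : n = m) {F : (Fin n → ZFSet.{u}) → ZFSet.{u}}
    (hF : PrimRecSet F) :
    PrimRecSet fun x : Fin m → ZFSet.{u} => F fun i => x (Fin.cast h i) := by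
  subst h
  exact hF

/-- Left padding with dummy variables. -/
theorem PrimRecSet.pad {n k : ℕ} {G : (Fin (k + 1) → ZFSet.{u}) → ZFSet.{u}}
    (hG : PrimRecSet G) :
    PrimRecSet (n := n + (k + 1)) fun z => G fun i => z (Fin.natAdd n i) := by
  have h := PrimRecSet.cast (by omega : (n + 1) + k = n + (k + 1))
    (PrimRecSet.comp₁ (m := n + 1) (k := k) hG (PrimRecSet.proj (Fin.last n)))
  convert h using 1
  funext z
  show G _ = G _
  congr 1
  funext i
  refine Fin.cases ?_ (fun j => ?_) i
  · rw [Fin.cons_zero]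
    exact congrArg z (Fin.ext (by simp))
  · rw [Fin.cons_succ]
    exact congrArg z (Fin.ext (by simp; omega))

/-- Collapsing appended extra variables, reindexed into the genuine variables by `τ`. -/
theorem PrimRecSet.collapse {n : ℕ} : ∀ (j : ℕ) (G : (Fin (n + j) → ZFSet.{u}) → ZFSet.{u}),
    PrimRecSet G → ∀ τ : Fin j → Fin n,
    PrimRecSet fun x : Fin n → ZFSet.{u} => G (Fin.append x fun i => x (τ i))
  | 0, G, hG, τ => by
    convert hG using 1
    · rfl
    funext x
    show G _ = G _
    congr 1
    funext i
    rw [Fin.append_apply']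
    exact dif_pos i.isLt
  | j + 1, G, hG, τ => by
    have h1 := PrimRecSet.comp₂ (m := n + j) (k := 0) hG
      (PrimRecSet.proj (Fin.castAdd j (τ (Fin.last j))))
    have h2 := PrimRecSet.collapse j _ h1 (fun i => τ i.castSucc)
    convert h2 using 1
    funext x
    show G _ = G _
    congr 1
    funext i
    simp only [Fin.append_apply', Fin.snoc_apply', Fin.coe_castAdd, Fin.coe_natAdd]
    by_cases h1 : (i : ℕ) < n
    · rw [dif_pos (by omega : (i : ℕ) < n + j + 1), dif_pos (by omega : (i : ℕ) < n + j),
        dif_pos h1, dif_pos h1]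
    · by_cases h2 : (i : ℕ) < n + j
      · rw [dif_pos (by omega : (i : ℕ) < n + j + 1), dif_pos h2, dif_neg h1, dif_neg h1]
        exact congrArg (fun t => x (τ t)) (Fin.ext (by simp))
      · have hi : (i : ℕ) < n + j + 1 := by have := i.isLt; omega
        rw [dif_pos hi, dif_neg h2, dif_pos (τ (Fin.last j)).isLt, dif_neg h1]
        simp only [show (i : ℕ) - n = j from by omega]
        rfl

/-- Closure under generalized composition with projections: variable reassignment. -/
theorem PrimRecSet.comp_proj {k n : ℕ} {G : (Fin k → ZFSet.{u}) → ZFSet.{u}}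
    (hG : PrimRecSet G) (σ : Fin k → Fin n) :
    PrimRecSet fun x : Fin n → ZFSet.{u} => G fun i => x (σ i) := by
  obtain ⟨k', rfl⟩ : ∃ k', k = k' + 1 := ⟨k - 1, by have := hG.arity_pos; omega⟩
  have h := PrimRecSet.collapse (n := n) (k' + 1) _ (PrimRecSet.pad (n := n) hG) σ
  convert h using 1
  funext x
  congr 1
  funext i
  rw [Fin.append_right]

open TrclAux in
theorem prim_tc1 : PrimRecSet.{u} (n := 1) fun v => tc1 (v 0) := by
  apply PrimRecSet.recursion (G := fun x : Fin 2 → ZFSet.{u} => x 0 ∪ {x 1})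
    PrimRecSet.adjoin
  intro x z U hU
  show tc1 z = U ∪ {z}
  have hU' : U = trcl z := by
    apply ZFSet.ext
    intro w
    rw [hU w, mem_trcl]
    constructor
    · rintro ⟨u, hu, hw⟩
      rw [show (Fin.snoc x u : Fin 1 → ZFSet.{u}) 0 = u from rfl, mem_tc1] at hw
      rcases hw with hw | rfl
      · exact Or.inr ⟨u, hu, hw⟩
      · exact Or.inl hu
    · rintro (hw | ⟨y, hy, hw⟩)
      · refine ⟨w, hw, ?_⟩
        rw [show (Fin.snoc x w : Fin 1 → ZFSet.{u}) 0 = w from rfl, mem_tc1]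
        exact Or.inr rfl
      · refine ⟨y, hy, ?_⟩
        rw [show (Fin.snoc x y : Fin 1 → ZFSet.{u}) 0 = y from rfl, mem_tc1]
        exact Or.inl hw
  rw [hU']
  rfl

open TrclAux in
theorem prim_cond_tc1 : PrimRecSet.{u} (n := 3)
    fun w => if w 2 ∈ w 1 then tc1 (w 2) else w 0 := by
  have hH2 : PrimRecSet.{u} (n := 2) fun y => tc1 (y 0) :=
    PrimRecSet.comp_proj prim_tc1 (fun _ => 0)
  have h3 : PrimRecSet.{u} (n := 3) fun y => if y 0 ∈ y 1 then tc1 (y 0) else y 2 := by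
    have h := PrimRecSet.comp₂ (m := 2) (k := 1) PrimRecSet.cond hH2
    convert h using 1
    funext x
    rfl
  have h := PrimRecSet.comp_proj h3 (fun i : Fin 3 => (⟨2 - (i : ℕ), by omega⟩ : Fin 3))
  convert h using 1
  funext x
  rfl

open TrclAux in
theorem prim_Fz : PrimRecSet.{u} (n := 2) fun v => Fz (v 0) (v 1) := by
  apply PrimRecSet.recursion (n := 1)
    (G := fun w : Fin 3 → ZFSet.{u} => if w 2 ∈ w 1 then tc1 (w 2) else w 0) prim_cond_tc1
  intro x z U hU
  show Fz (x 0) z = if z ∈ x 0 then tc1 z else U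
  rw [Fz_eq]
  by_cases h : z ∈ x 0
  · rw [if_pos h, if_pos h]
  · rw [if_neg h, if_neg h]
    apply ZFSet.ext
    intro w
    rw [mem_sUnion_zimg, hU w]
    rfl

open TrclAux in
theorem prim_trcl : PrimRecSet.{u} (n := 1) fun v => trcl (v 0) := by
  have h := PrimRecSet.comp_proj prim_Fz (fun _ : Fin 2 => (0 : Fin 1))
  have e : (fun v : Fin 1 → ZFSet.{u} => Fz (v 0) (v 0)) = fun v => trcl (v 0) :=
    funext fun v => Fz_diag (v 0)
  exact e ▸ h

/-- The transitive closure function `trcl`, i.e. the unique function satisfying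
`trcl x = x ∪ ⋃_{y ∈ x} trcl y` (membershipwise: `w ∈ trcl x ↔ w ∈ x ∨ ∃ y ∈ x, w ∈ trcl y`),
exists and is a primitive recursive set function. -/
theorem trcl_primRecSet :
    (∃ trcl : ZFSet.{u} → ZFSet.{u},
      ∀ x w : ZFSet.{u}, w ∈ trcl x ↔ w ∈ x ∨ ∃ y ∈ x, w ∈ trcl y) ∧
    ∀ trcl : ZFSet.{u} → ZFSet.{u},
      (∀ x w : ZFSet.{u}, w ∈ trcl x ↔ w ∈ x ∨ ∃ y ∈ x, w ∈ trcl y) →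
      PrimRecSet (n := 1) fun v => trcl (v 0) := by
  constructor
  · exact ⟨TrclAux.trcl, fun x w => TrclAux.mem_trcl⟩
  · intro f hf
    have hfeq : ∀ x, f x = TrclAux.trcl x := by
      intro x
      induction x using ZFSet.inductionOn with
      | _ x ih =>
        apply ZFSet.ext
        intro w
        rw [hf x w, TrclAux.mem_trcl]
        constructor
        · rintro (hw | ⟨y, hy, hw⟩)
          · exact Or.inl hw
          · exact Or.inr ⟨y, hy, (ih y hy) ▸ hw⟩
        · rintro (hw | ⟨y, hy, hw⟩)
          · exact Or.inl hw
          · exact Or.inr ⟨y, hy, (ih y hy) ▸ hw⟩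
    have e : (fun v : Fin 1 → ZFSet.{u} => f (v 0)) = fun v => TrclAux.trcl (v 0) :=
      funext fun v => hfeq (v 0)
    rw [e]
    exact prim_trcl
end

section
/- Let κ be an uncountable cardinal (ℵ₀ < κ) and let F be a primitive recursive set function of arity n. If x₀, …, x_{n−1} are ZFSets each belonging to H(κ), then F(x₀, …, x_{n−1}) ∈ H(κ). -/
universe u

open scoped Classical

/-- The transitive closure of `{x}`: the smallest collection of `ZFSet`s containing `x`
and closed under membership. -/
def transCl (x : ZFSet.{u}) : Set ZFSet.{u} :=
  ⋂₀ {T : Set ZFSet.{u} | x ∈ T ∧ ∀ y ∈ T, ∀ z : ZFSet.{u}, z ∈ y → z ∈ T}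

/-- `x` has hereditary cardinality less than `κ`, i.e. `x ∈ H(κ)`. -/
def InH (κ : Cardinal.{u + 1}) (x : ZFSet.{u}) : Prop :=
  Cardinal.mk (transCl x) < κ

section Aux

open Cardinal

lemma transCl_mem_self (x : ZFSet.{u}) : x ∈ transCl x :=
  Set.mem_sInter.2 fun _ hT => hT.1

lemma transCl_closed {x y z : ZFSet.{u}} (hy : y ∈ transCl x) (hz : z ∈ y) :
    z ∈ transCl x :=
  Set.mem_sInter.2 fun T hT => hT.2 y (Set.mem_sInter.1 hy T hT) z hz

lemma transCl_minimal {x : ZFSet.{u}} {T : Set ZFSet.{u}} (hx : x ∈ T)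
    (hT : ∀ y ∈ T, ∀ z : ZFSet.{u}, z ∈ y → z ∈ T) : transCl x ⊆ T :=
  fun _ h => Set.mem_sInter.1 h T ⟨hx, hT⟩

lemma transCl_subset_of_mem {x y : ZFSet.{u}} (h : y ∈ transCl x) :
    transCl y ⊆ transCl x :=
  transCl_minimal h fun _ ha _ hb => transCl_closed ha hb

lemma primRecSet_bound {n : ℕ} {F : (Fin n → ZFSet.{u}) → ZFSet.{u}}
    (hF : PrimRecSet F) :
    ∀ c : Cardinal.{u + 1}, ℵ₀ ≤ c →
      ∀ x : Fin n → ZFSet.{u}, (∀ i, #(transCl (x i)) ≤ c) →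
        #(transCl (F x)) ≤ c := by
  induction hF with
  | empty =>
    intro c hc x _
    have hsub : transCl (∅ : ZFSet.{u}) ⊆ {∅} := by
      refine transCl_minimal rfl ?_
      rintro y (rfl : y = ∅) z hz
      exact absurd hz (ZFSet.notMem_empty z)
    calc #(transCl (∅ : ZFSet.{u})) ≤ #({∅} : Set ZFSet.{u}) :=
          Cardinal.mk_le_mk_of_subset hsub
      _ = 1 := Cardinal.mk_singleton _
      _ ≤ c := (Cardinal.one_lt_aleph0.le).trans hc
  | proj i =>
    intro c hc x hx
    exact hx i
  | adjoin =>
    intro c hc x hx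
    have hsub : transCl (x 0 ∪ {x 1}) ⊆
        insert (x 0 ∪ {x 1}) (transCl (x 0) ∪ transCl (x 1)) := by
      refine transCl_minimal (Set.mem_insert _ _) ?_
      intro y hy z hz
      rcases hy with rfl | hy
      · rcases ZFSet.mem_union.1 hz with h | h
        · exact Set.mem_insert_of_mem _ (Or.inl (transCl_closed (transCl_mem_self _) h))
        · have hz1 : z = x 1 := ZFSet.mem_singleton.1 h
          subst hz1
          exact Set.mem_insert_of_mem _ (Or.inr (transCl_mem_self _))
      · rcases hy with hy | hy
        · exact Set.mem_insert_of_mem _ (Or.inl (transCl_closed hy hz))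
        · exact Set.mem_insert_of_mem _ (Or.inr (transCl_closed hy hz))
    calc #(transCl (x 0 ∪ {x 1}))
        ≤ #(insert (x 0 ∪ {x 1}) (transCl (x 0) ∪ transCl (x 1)) : Set ZFSet.{u}) :=
          Cardinal.mk_le_mk_of_subset hsub
      _ ≤ #(transCl (x 0) ∪ transCl (x 1) : Set ZFSet.{u}) + 1 := Cardinal.mk_insert_le
      _ ≤ (#(transCl (x 0)) + #(transCl (x 1))) + 1 :=
          add_le_add_left (Cardinal.mk_union_le _ _) 1
      _ ≤ c := Cardinal.add_le_of_le hc
            (Cardinal.add_le_of_le hc (hx 0) (hx 1))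
            ((Cardinal.one_lt_aleph0.le).trans hc)
  | cond =>
    intro c hc x hx
    dsimp only
    split
    · exact hx 2
    · exact hx 3
  | comp₁ hG hH ihG ihH =>
    intro c hc x hx
    refine ihG c hc _ ?_
    intro i
    refine Fin.cases ?_ ?_ i
    · simpa using ihH c hc _ fun j => hx _
    · intro j
      simpa using hx _
  | comp₂ hG hH ihG ihH =>
    intro c hc x hx
    refine ihG c hc _ ?_
    intro i
    refine Fin.addCases ?_ ?_ i
    · intro i
      rw [Fin.append_left]
      refine Fin.lastCases ?_ ?_ i
      · rw [Fin.snoc_last]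
        exact ihH c hc _ fun j => hx _
      · intro j
        rw [Fin.snoc_castSucc]
        exact hx _
    · intro j
      rw [Fin.append_right]
      exact hx _
  | @recursion m G F hG hrec ihG =>
    intro c hc x' hx'
    have key : ∀ z : ZFSet.{u}, ∀ x : Fin m → ZFSet.{u},
        (∀ i, #(transCl (x i)) ≤ c) → #(transCl z) ≤ c →
          #(transCl (F (Fin.snoc x z))) ≤ c := by
      intro z
      induction z using ZFSet.inductionOn with
      | _ z ih =>
        intro x hx hz
        letI : ZFSet.Definable₁ (fun u => F (Fin.snoc x u)) :=
          Classical.allZFSetDefinable _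
        set U : ZFSet.{u} :=
          ZFSet.sUnion (ZFSet.image (fun u => F (Fin.snoc x u)) z) with hUdef
        have hU : ∀ w : ZFSet.{u}, w ∈ U ↔ ∃ u ∈ z, w ∈ F (Fin.snoc x u) := by
          intro w
          rw [hUdef, ZFSet.mem_sUnion]
          constructor
          · rintro ⟨v, hv, hwv⟩
            rcases ZFSet.mem_image.1 hv with ⟨u, hu, rfl⟩
            exact ⟨u, hu, hwv⟩
          · rintro ⟨u, hu, hwu⟩
            exact ⟨F (Fin.snoc x u), ZFSet.mem_image.2 ⟨u, hu, rfl⟩, hwu⟩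
        rw [hrec x z U hU]
        refine ihG c hc _ ?_
        intro i
        refine Fin.cases ?_ ?_ i
        · -- bound for U
          rw [Fin.cons_zero]
          have hzc : ∀ u ∈ z, #(transCl u) ≤ c := fun u hu =>
            (Cardinal.mk_le_mk_of_subset
              (transCl_subset_of_mem (transCl_closed (transCl_mem_self z) hu))).trans hz
          have hFu : ∀ u ∈ z, #(transCl (F (Fin.snoc x u))) ≤ c := fun u hu =>
            ih u hu x hx (hzc u hu)
          have hsub : transCl U ⊆
              insert U (⋃ u ∈ z.toSet, transCl (F (Fin.snoc x u))) := by
            refine transCl_minimal (Set.mem_insert _ _) ?_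
            intro y hy w hw
            rcases hy with rfl | hy
            · rcases (hU w).1 hw with ⟨u, hu, hwu⟩
              exact Set.mem_insert_of_mem _ <|
                Set.mem_biUnion ((SetLike.mem_coe).2 hu)
                  (transCl_closed (transCl_mem_self _) hwu)
            · rcases Set.mem_iUnion₂.1 hy with ⟨u, hu, hyu⟩
              exact Set.mem_insert_of_mem _ <|
                Set.mem_biUnion hu (transCl_closed hyu hw)
          have hzt : #(z.toSet) ≤ c := by
            refine (Cardinal.mk_le_mk_of_subset (fun u hu => ?_)).trans hz
            exact transCl_closed (transCl_mem_self z) ((SetLike.mem_coe).1 hu)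
          have hbU : #(⋃ u ∈ z.toSet, transCl (F (Fin.snoc x u))) ≤ c := by
            refine (Cardinal.mk_biUnion_le _ _).trans ?_
            have h1 : ⨆ u : z.toSet, #(transCl (F (Fin.snoc x u.1))) ≤ c :=
              ciSup_le' fun u => hFu u.1 ((SetLike.mem_coe).1 u.2)
            calc #(z.toSet) * ⨆ u : z.toSet, #(transCl (F (Fin.snoc x u.1)))
                ≤ c * c := mul_le_mul' hzt h1
              _ = c := Cardinal.mul_eq_self hc
          calc #(transCl U)
              ≤ #(insert U (⋃ u ∈ z.toSet, transCl (F (Fin.snoc x u))) : Set ZFSet.{u}) :=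
                Cardinal.mk_le_mk_of_subset hsub
            _ ≤ #(⋃ u ∈ z.toSet, transCl (F (Fin.snoc x u))) + 1 := Cardinal.mk_insert_le
            _ ≤ c := Cardinal.add_le_of_le hc hbU ((Cardinal.one_lt_aleph0.le).trans hc)
        · intro j
          rw [Fin.cons_succ]
          refine Fin.lastCases ?_ ?_ j
          · rw [Fin.snoc_last]; exact hz
          · intro j
            rw [Fin.snoc_castSucc]
            exact hx j
    have := key (x' (Fin.last m)) (Fin.init x')
      (fun i => hx' _) (hx' (Fin.last m))
    rwa [Fin.snoc_init_self x'] at this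

end Aux

/-- Primitive recursive set functions map `H(κ)` into `H(κ)` for every uncountable
cardinal `κ`. -/
theorem primRecSet_mem_H (κ : Cardinal.{u + 1}) (hκ : Cardinal.aleph0 < κ)
    {n : ℕ} {F : (Fin n → ZFSet.{u}) → ZFSet.{u}} (hF : PrimRecSet F)
    (x : Fin n → ZFSet.{u}) (hx : ∀ i : Fin n, InH κ (x i)) :
    InH κ (F x) := by
  classical
  set c : Cardinal.{u + 1} :=
    Cardinal.aleph0 ⊔ (Finset.univ : Finset (Fin n)).sup
      (fun i => Cardinal.mk (transCl (x i))) with hcdef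
  have hc0 : Cardinal.aleph0 ≤ c := le_sup_left
  have hcx : ∀ i, Cardinal.mk (transCl (x i)) ≤ c := fun i =>
    le_trans (Finset.le_sup (f := fun i => Cardinal.mk (transCl (x i))) (Finset.mem_univ i)) le_sup_right
  have hcκ : c < κ := by
    refine max_lt hκ ?_
    rw [Finset.sup_lt_iff (lt_of_le_of_lt bot_le hκ)]
    intro i _
    exact hx i
  exact lt_of_le_of_lt (primRecSet_bound hF c hc0 x hcx) hcκ
end
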